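/- Let n ≥ 2 be an integer, κ < 0 a real number, ω_n > 0 a constant, and let V : (0, ∞) → (0, ∞) be a differentiable function such that Q(s) := V(s)/B^κ_n(s) is non-decreasing on (0, ∞). Then for every R > 0, the weighted Rayleigh quotient of the test function f_R satisfies ∫_{R/2}^{R} f_R'(s)²·V'(s) ds / ∫_{R/2}^{R} f_R(s)²·V'(s) ds ≤ (Q(R)/Q(R/2))·[ (4·B^κ_n(R)/(R·S^κ_n(R)))·F(R)·(ln Q(R) − ln Q(R/2)) + Λ(R) ], where F(R) = ((n−1)²/4)·Ct_κ(R/2)² + 4π²/R² + (2(n−1)π/R)·Ct_κ(R/2) and Λ(R) = ((n−1)²/4)·Ct_κ(R/2)² + 8π²/R² + (4π(n−1)/R)·Ct_κ(R/2). -/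

import Mathlib

set_option maxHeartbeats 2000000


open Real MeasureTheory in
/-- For n ≥ 2, κ < 0, ω_n > 0, V : (0,∞) → (0,∞) differentiable
with Q(s) := V(s)/B^κ_n(s) non-decreasing on (0, ∞), and
f_R(s) = sin(2π(s − R/2)/R)/(S^κ_n(s))^{1/2}: for every R > 0,
∫_{R/2}^{R} f_R'(s)²·V'(s) ds / ∫_{R/2}^{R} f_R(s)²·V'(s) ds
  ≤ (Q(R)/Q(R/2))·[(4·B^κ_n(R)/(R·S^κ_n(R)))·F(R)·(ln Q(R) − ln Q(R/2)) + Λ(R)],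
with F(R) = ((n−1)²/4)·Ct_κ(R/2)² + 4π²/R² + (2(n−1)π/R)·Ct_κ(R/2) and
Λ(R) = ((n−1)²/4)·Ct_κ(R/2)² + 8π²/R² + (4π(n−1)/R)·Ct_κ(R/2). -/
theorem stmt_14 (n : ℕ) (hn : 2 ≤ n) (κ : ℝ) (hκ : κ < 0) (ω : ℝ) (hω : 0 < ω)
    (S : ℝ → ℝ)
    (hS : ∀ t : ℝ, S t = Real.sinh (Real.sqrt (-κ) * t) / Real.sqrt (-κ))
    (Ct : ℝ → ℝ)
    (hCt : ∀ t : ℝ, Ct t =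
        Real.sqrt (-κ) *
          (Real.cosh (Real.sqrt (-κ) * t) / Real.sinh (Real.sqrt (-κ) * t)))
    (Sn : ℝ → ℝ) (hSn : ∀ R : ℝ, Sn R = ω * (S R) ^ (n - 1))
    (Bn : ℝ → ℝ) (hBn : ∀ R : ℝ, Bn R = ∫ s in (0:ℝ)..R, Sn s)
    (V : ℝ → ℝ) (hVpos : ∀ s > (0:ℝ), 0 < V s)
    (hVdiff : ∀ s > (0:ℝ), DifferentiableAt ℝ V s)
    (Q : ℝ → ℝ) (hQ : ∀ s : ℝ, Q s = V s / Bn s)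
    (hQmono : MonotoneOn Q (Set.Ioi (0:ℝ)))
    (f : ℝ → ℝ → ℝ)
    (hf : ∀ R s : ℝ, f R s =
        Real.sin (2 * π * (s - R / 2) / R) / Real.sqrt (Sn s))
    (F : ℝ → ℝ)
    (hF : ∀ R : ℝ, F R =
        (((n : ℝ) - 1) ^ 2 / 4) * (Ct (R / 2)) ^ 2 + 4 * π ^ 2 / R ^ 2 +
          (2 * ((n : ℝ) - 1) * π / R) * Ct (R / 2))
    (Λ : ℝ → ℝ)
    (hΛ : ∀ R : ℝ, Λ R =
        (((n : ℝ) - 1) ^ 2 / 4) * (Ct (R / 2)) ^ 2 + 8 * π ^ 2 / R ^ 2 +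
          (4 * π * ((n : ℝ) - 1) / R) * Ct (R / 2)) :
    ∀ R > (0:ℝ),
      (∫ s in (R / 2)..R, (deriv (f R) s) ^ 2 * deriv V s) /
          (∫ s in (R / 2)..R, (f R s) ^ 2 * deriv V s) ≤
        (Q R / Q (R / 2)) *
          ((4 * Bn R / (R * Sn R)) * F R *
              (Real.log (Q R) - Real.log (Q (R / 2))) + Λ R) := by
  intro R hR
  set c0 : ℝ := Real.sqrt (-κ) with hc0def
  have hc0 : 0 < c0 := Real.sqrt_pos.2 (by linarith)
  have hSpos : ∀ t > (0:ℝ), 0 < S t := by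
    intro t ht
    rw [hS]
    exact div_pos (Real.sinh_pos_iff.2 (by positivity)) hc0
  have hCtpos : ∀ t > (0:ℝ), 0 < Ct t := by
    intro t ht
    rw [hCt]
    have h1 : 0 < Real.sinh (c0 * t) := Real.sinh_pos_iff.2 (by positivity)
    have h2 : 0 < Real.cosh (c0 * t) := Real.cosh_pos _
    positivity
  have hCtanti : ∀ x y : ℝ, 0 < x → x ≤ y → Ct y ≤ Ct x := by
    intro x y hx hxy
    rw [hCt, hCt]
    have hsx : 0 < Real.sinh (c0 * x) := Real.sinh_pos_iff.2 (by positivity)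
    have hsy : 0 < Real.sinh (c0 * y) := Real.sinh_pos_iff.2 (by nlinarith)
    have key : 0 ≤ Real.sinh (c0 * y - c0 * x) := by
      apply Real.sinh_nonneg_iff.2; nlinarith
    rw [Real.sinh_sub] at key
    have : Real.cosh (c0*y) / Real.sinh (c0*y) ≤ Real.cosh (c0*x) / Real.sinh (c0*x) := by
      rw [div_le_div_iff₀ hsy hsx]
      nlinarith
    nlinarith
  have hSnpos : ∀ t > (0:ℝ), 0 < Sn t := by
    intro t ht
    rw [hSn]
    have := hSpos t ht
    positivity
  -- derivative of S
  have hSd : ∀ t : ℝ, HasDerivAt S (Real.cosh (c0 * t)) t := by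
    intro t
    have h1 : HasDerivAt (fun t : ℝ => c0 * t) c0 t := by
      simpa using (hasDerivAt_id t).const_mul c0
    have h2 : HasDerivAt (fun t : ℝ => Real.sinh (c0 * t)) (Real.cosh (c0 * t) * c0) t :=
      (Real.hasDerivAt_sinh (c0 * t)).comp t h1
    have h3 : HasDerivAt (fun t : ℝ => Real.sinh (c0 * t) / c0)
        (Real.cosh (c0 * t) * c0 / c0) t := h2.div_const c0
    have hfe : S = fun t : ℝ => Real.sinh (c0 * t) / c0 := funext hS
    rw [hfe]
    convert h3 using 1
    field_simp
  set Snd : ℝ → ℝ := fun t => ω * (((n-1 : ℕ):ℝ) * S t ^ (n - 1 - 1) * Real.cosh (c0 * t))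
    with hSnddef
  have hSnd : ∀ t : ℝ, HasDerivAt Sn (Snd t) t := by
    intro t
    have h1 : HasDerivAt (fun t => S t ^ (n-1))
        (((n-1:ℕ):ℝ) * S t ^ (n - 1 - 1) * Real.cosh (c0 * t)) t := (hSd t).pow (n-1)
    have hfe : Sn = fun t => ω * S t ^ (n-1) := funext hSn
    rw [hfe]
    simpa [hSnddef, mul_assoc] using h1.const_mul ω
  have hSndeq : ∀ t > (0:ℝ), Snd t = ((n:ℝ) - 1) * Ct t * Sn t := by
    intro t ht
    have hsx : 0 < Real.sinh (c0 * t) := Real.sinh_pos_iff.2 (by positivity)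
    have hcast : ((n - 1 : ℕ):ℝ) = (n:ℝ) - 1 := by
      have : (1:ℕ) ≤ n := by omega
      push_cast [Nat.cast_sub this]
      ring
    have hpow : S t ^ (n - 1) = S t ^ (n - 1 - 1) * S t := by
      rw [← pow_succ]
      congr 1
      omega
    obtain ⟨k, hk1⟩ : ∃ k, n - 1 = k + 1 := ⟨n - 2, by omega⟩
    have hkc : (k:ℝ) + 2 = (n:ℝ) := by exact_mod_cast congrArg (Nat.cast : ℕ → ℝ) (by omega : k + 2 = n)
    simp only [hSnddef, hCt, hSn, hS, hcast, hk1, Nat.add_sub_cancel]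
    rw [← hkc]; simp only [div_pow]; push_cast
    field_simp
    ring
  have hScont : Continuous S := by
    have : Continuous fun t : ℝ => Real.sinh (c0 * t) / c0 :=
      (Real.continuous_sinh.comp (continuous_const.mul continuous_id)).div_const c0
    exact (funext hS : S = _) ▸ this
  have hSncont : Continuous Sn := by
    have : Continuous fun t : ℝ => ω * S t ^ (n-1) := continuous_const.mul (hScont.pow _)
    exact (funext hSn : Sn = _) ▸ this
  have hSndcont : Continuous Snd := by
    apply continuous_const.mul
    exact ((continuous_const.mul (hScont.pow _)).mul
      (Real.continuous_cosh.comp (continuous_const.mul continuous_id)))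
  have hBnd : ∀ t : ℝ, HasDerivAt Bn (Sn t) t := by
    intro t
    have hfe : Bn = fun R => ∫ s in (0:ℝ)..R, Sn s := funext hBn
    rw [hfe]
    exact intervalIntegral.integral_hasDerivAt_right
      (hSncont.intervalIntegrable _ _)
      (hSncont.stronglyMeasurableAtFilter _ _)
      hSncont.continuousAt
  have hBnpos : ∀ t > (0:ℝ), 0 < Bn t := by
    intro t ht
    rw [hBn]
    apply intervalIntegral.intervalIntegral_pos_of_pos_on (hSncont.intervalIntegrable _ _)
      (fun x hx => hSnpos x hx.1) ht
  have hSn0 : Sn 0 = 0 := by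
    rw [hSn, hS]
    simp [Real.sinh_zero, zero_pow (by omega : n - 1 ≠ 0)]
  have hSnFTC : ∀ x y : ℝ, Sn y - Sn x = ∫ t in x..y, Snd t := by
    intro x y
    rw [intervalIntegral.integral_eq_sub_of_hasDerivAt (fun t _ => hSnd t)
      (hSndcont.intervalIntegrable _ _)]
  have hBnFTC : ∀ x y : ℝ, Bn y - Bn x = ∫ t in x..y, Sn t := by
    intro x y
    rw [intervalIntegral.integral_eq_sub_of_hasDerivAt (fun t _ => hBnd t)
      (hSncont.intervalIntegrable _ _)]
  have hSndnonneg : ∀ t : ℝ, 0 ≤ t → 0 ≤ Snd t := by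
    intro t ht
    have hS0 : 0 ≤ S t := by
      rw [hS]
      exact div_nonneg (Real.sinh_nonneg_iff.2 (by positivity)) hc0.le
    have := (Real.cosh_pos (c0 * t)).le
    positivity
  -- Lemma C
  have hLemC : ∀ s > (0:ℝ), ((n:ℝ) - 1) * Ct s * Bn s ≤ Sn s := by
    intro s hs
    have hcast : (0:ℝ) ≤ ((n:ℝ) - 1) := by
      have : (2:ℝ) ≤ (n:ℝ) := by exact_mod_cast hn
      linarith
    have hpt : ∀ t ∈ Set.Icc (0:ℝ) s, ((n:ℝ) - 1) * Ct s * Sn t ≤ Snd t := by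
      intro t ⟨ht0, hts⟩
      rcases eq_or_lt_of_le ht0 with h | h
      · rw [← h, hSn0, mul_zero]
        exact hSndnonneg 0 le_rfl
      · rw [hSndeq t h]
        have h1 : Ct s ≤ Ct t := hCtanti t s h hts
        have h2 : 0 < Sn t := hSnpos t h
        nlinarith [mul_nonneg (mul_nonneg hcast (sub_nonneg.2 h1)) h2.le]
    have hint : (∫ t in (0:ℝ)..s, ((n:ℝ) - 1) * Ct s * Sn t) ≤ ∫ t in (0:ℝ)..s, Snd t := by
      apply intervalIntegral.integral_mono_on hs.le
        ((hSncont.intervalIntegrable _ _).const_mul _)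
        (hSndcont.intervalIntegrable _ _) hpt
    rw [intervalIntegral.integral_const_mul, ← hBn s] at hint
    have := hSnFTC 0 s
    rw [hSn0, sub_zero] at this
    linarith [hint, this.ge]
  -- Lemma D
  have hLemD : ∀ s R : ℝ, 0 < s → s ≤ R → Bn s * Sn R ≤ Bn R * Sn s := by
    intro s R hs hsR
    have hBns := hBnpos s hs
    have hSns := hSnpos s hs
    have hpt : ∀ t ∈ Set.Icc s R, Bn s * Snd t ≤ Sn s * Sn t := by
      intro t ⟨hst, htR⟩
      have ht : 0 < t := lt_of_lt_of_le hs hst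
      rw [hSndeq t ht]
      have h1 : Ct t ≤ Ct s := hCtanti s t hs hst
      have h2 : 0 < Sn t := hSnpos t ht
      have h3 := hLemC s hs
      have hcast : (0:ℝ) ≤ ((n:ℝ) - 1) := by
        have : (2:ℝ) ≤ (n:ℝ) := by exact_mod_cast hn
        linarith
      have hCts := hCtpos s hs
      have e1 : Bn s * (((n:ℝ) - 1) * Ct t) ≤ Bn s * (((n:ℝ) - 1) * Ct s) := by
        have := mul_le_mul_of_nonneg_left h1 hcast
        nlinarith
      have e2 : Bn s * (((n:ℝ) - 1) * Ct s) ≤ Sn s := by nlinarith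
      nlinarith [mul_le_mul_of_nonneg_right e1 h2.le, mul_le_mul_of_nonneg_right e2 h2.le]
    have hint : (∫ t in s..R, Bn s * Snd t) ≤ ∫ t in s..R, Sn s * Sn t := by
      apply intervalIntegral.integral_mono_on hsR
        ((hSndcont.intervalIntegrable _ _).const_mul _)
        ((hSncont.intervalIntegrable _ _).const_mul _) hpt
    have i1 : (∫ t in s..R, Bn s * Snd t) = Bn s * ∫ t in s..R, Snd t :=
      intervalIntegral.integral_const_mul _ _
    have i2 : (∫ t in s..R, Sn s * Sn t) = Sn s * ∫ t in s..R, Sn t :=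
      intervalIntegral.integral_const_mul _ _
    rw [i1, i2, ← hSnFTC s R, ← hBnFTC s R] at hint
    nlinarith
  have hQpos : ∀ s > (0:ℝ), 0 < Q s := by
    intro s hs
    rw [hQ]
    exact div_pos (hVpos s hs) (hBnpos s hs)
  have hQdiff : ∀ s > (0:ℝ), DifferentiableAt ℝ Q s := by
    intro s hs
    have : Q = fun s => V s / Bn s := funext hQ
    rw [this]
    exact (hVdiff s hs).div (hBnd s).differentiableAt (hBnpos s hs).ne'
  have hQderiv_nonneg : ∀ s > (0:ℝ), 0 ≤ deriv Q s := by
    intro s hs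
    have hd : HasDerivAt Q (deriv Q s) s := (hQdiff s hs).hasDerivAt
    have htend := hasDerivAt_iff_tendsto_slope.mp hd
    have htend' : Filter.Tendsto (slope Q s) (nhdsWithin s (Set.Ioi s)) (nhds (deriv Q s)) :=
      htend.mono_left (nhdsWithin_mono s fun x hx => ne_of_gt hx)
    refine ge_of_tendsto htend' ?_
    filter_upwards [self_mem_nhdsWithin, Ioo_mem_nhdsGT_of_mem
      (Set.mem_Ico.2 ⟨le_refl s, lt_add_one s⟩)] with x hx _
    have hxs : s < x := hx
    rw [slope_def_field]
    have hQle : Q s ≤ Q x := hQmono (Set.mem_Ioi.2 hs) (Set.mem_Ioi.2 (hs.trans hxs)) hxs.le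
    have := sub_pos.2 hxs
    exact div_nonneg (by linarith) (by linarith)
  have hVderiv : ∀ s > (0:ℝ), deriv V s = deriv Q s * Bn s + Q s * Sn s := by
    intro s hs
    have heq : V =ᶠ[nhds s] fun x => Q x * Bn x := by
      filter_upwards [Ioi_mem_nhds hs] with x hx
      rw [hQ x, div_mul_cancel₀ _ (hBnpos x hx).ne']
    rw [Filter.EventuallyEq.deriv_eq heq]
    exact (((hQdiff s hs).hasDerivAt.mul (hBnd s))).deriv
  have hR2 : (0:ℝ) < R / 2 := by linarith
  set θ : ℝ → ℝ := fun s => 2 * π * (s - R / 2) / R with hθdef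
  set a : ℝ := 2 * π / R with hadef
  set c : ℝ := ((n:ℝ) - 1) / 2 * Ct (R / 2) with hcdef
  have hπ := Real.pi_pos
  have ha : 0 < a := by positivity
  have hncast : (2:ℝ) ≤ (n:ℝ) := by exact_mod_cast hn
  have hc : 0 < c := by
    have := hCtpos (R/2) hR2
    have h2 : (0:ℝ) < (n:ℝ) - 1 := by linarith
    positivity
  have hθd : ∀ s : ℝ, HasDerivAt θ a s := by
    intro s
    have h1 : HasDerivAt (fun s : ℝ => 2 * π * (s - R/2)) (2 * π) s := by
      simpa using ((hasDerivAt_id s).sub_const (R/2)).const_mul (2*π)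
    exact h1.div_const R
  set fd : ℝ → ℝ := fun s =>
    (a * Real.cos (θ s) - Real.sin (θ s) * (Snd s / (2 * Sn s))) / Real.sqrt (Sn s)
    with hfddef
  have hfd : ∀ s > (0:ℝ), HasDerivAt (f R) (fd s) s := by
    intro s hs
    have hSns : 0 < Sn s := hSnpos s hs
    have hsq : Real.sqrt (Sn s) ≠ 0 := by positivity
    have hu : HasDerivAt (fun s => Real.sin (θ s)) (Real.cos (θ s) * a) s :=
      (Real.hasDerivAt_sin (θ s)).comp s (hθd s)
    have hw : HasDerivAt (fun s => Real.sqrt (Sn s)) (Snd s / (2 * Real.sqrt (Sn s))) s := by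
      have h1 := (Real.hasDerivAt_sqrt hSns.ne').comp s (hSnd s)
      refine h1.congr_deriv ?_
      rw [one_div, mul_comm]
      ring
    have hdiv := hu.div hw hsq
    have hfe : f R = fun s => Real.sin (θ s) / Real.sqrt (Sn s) := funext (hf R)
    rw [hfe]
    refine hdiv.congr_deriv ?_
    symm
    show (a * Real.cos (θ s) - Real.sin (θ s) * (Snd s / (2 * Sn s))) / Real.sqrt (Sn s) = _
    obtain ⟨q, hq, hqq⟩ : ∃ q : ℝ, 0 < q ∧ Sn s = q ^ 2 :=
      ⟨Real.sqrt (Sn s), Real.sqrt_pos.2 hSns, (Real.sq_sqrt hSns.le).symm⟩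
    rw [hqq, Real.sqrt_sq hq.le]
    field_simp
  have hfdsq : ∀ s > (0:ℝ), fd s ^ 2 * Sn s =
      (a * Real.cos (θ s) - Real.sin (θ s) * (Snd s / (2 * Sn s))) ^ 2 := by
    intro s hs
    have hSns : 0 < Sn s := hSnpos s hs
    show ((a * Real.cos (θ s) - Real.sin (θ s) * (Snd s / (2 * Sn s))) / Real.sqrt (Sn s)) ^ 2 * Sn s = _
    rw [div_pow, Real.sq_sqrt hSns.le]
    field_simp
  have hbd : ∀ s ∈ Set.Icc (R/2) R, fd s ^ 2 * Sn s ≤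
      a^2 * Real.cos (θ s)^2 + c^2 * Real.sin (θ s)^2 + a * c := by
    intro s ⟨hs1, hs2⟩
    have hs : 0 < s := lt_of_lt_of_le hR2 hs1
    have hSns : 0 < Sn s := hSnpos s hs
    rw [hfdsq s hs]
    have hb : Snd s / (2 * Sn s) = ((n:ℝ) - 1) / 2 * Ct s := by
      rw [hSndeq s hs]
      field_simp [hSns.ne']
    rw [hb]
    set b : ℝ := ((n:ℝ) - 1) / 2 * Ct s with hbdef
    have hbpos : 0 < b := by
      have := hCtpos s hs
      have h2 : (0:ℝ) < (n:ℝ) - 1 := by linarith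
      positivity
    have hbc : b ≤ c := by
      have := hCtanti (R/2) s hR2 hs1
      have h2 : (0:ℝ) ≤ ((n:ℝ) - 1) / 2 := by linarith
      rw [hbdef, hcdef]
      nlinarith
    have hsc := Real.sin_sq_add_cos_sq (θ s)
    nlinarith [sq_nonneg (Real.sin (θ s) + Real.cos (θ s)),
      sq_nonneg (Real.sin (θ s) - Real.cos (θ s)),
      mul_nonneg (mul_nonneg ha.le hbpos.le) (sq_nonneg (Real.sin (θ s) + Real.cos (θ s))),
      mul_nonneg (mul_nonneg ha.le hbpos.le) (sq_nonneg (Real.sin (θ s) - Real.cos (θ s))),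
      mul_nonneg (mul_nonneg (sub_nonneg.2 hbc) (by linarith : (0:ℝ) ≤ c + b)) (sq_nonneg (Real.sin (θ s))),
      mul_le_mul_of_nonneg_left hbc ha.le]
  have hθcont : Continuous θ := by
    apply Continuous.div_const
    exact continuous_const.mul (continuous_id.sub continuous_const)
  have hθR : θ R = π := by
    rw [hθdef]
    field_simp
    ring
  have hθR2 : θ (R/2) = 0 := by
    rw [hθdef]
    simp
  have Isin : (∫ s in (R/2)..R, Real.sin (θ s)^2) = R/4 := by
    have hG : ∀ s : ℝ, HasDerivAt (fun s => s/2 - R/(8*π) * Real.sin (2 * θ s))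
        (Real.sin (θ s)^2) s := by
      intro s
      have h1 : HasDerivAt (fun s => Real.sin (2 * θ s)) (Real.cos (2 * θ s) * (2 * a)) s :=
        ((hθd s).const_mul 2).sin
      have h2 := ((hasDerivAt_id s).div_const 2).sub (h1.const_mul (R/(8*π)))
      refine h2.congr_deriv ?_
      rw [Real.sin_sq_eq_half_sub]
      rw [hadef]
      field_simp
      ring
    rw [intervalIntegral.integral_eq_sub_of_hasDerivAt (fun s _ => hG s)
      (Continuous.intervalIntegrable ((Real.continuous_sin.comp hθcont).pow 2) _ _)]
    rw [hθR, hθR2]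
    norm_num [Real.sin_two_pi]
    ring
  have Icos : (∫ s in (R/2)..R, Real.cos (θ s)^2) = R/4 := by
    have hG : ∀ s : ℝ, HasDerivAt (fun s => s/2 + R/(8*π) * Real.sin (2 * θ s))
        (Real.cos (θ s)^2) s := by
      intro s
      have h1 : HasDerivAt (fun s => Real.sin (2 * θ s)) (Real.cos (2 * θ s) * (2 * a)) s :=
        ((hθd s).const_mul 2).sin
      have h2 := ((hasDerivAt_id s).div_const 2).add (h1.const_mul (R/(8*π)))
      refine h2.congr_deriv ?_
      rw [Real.cos_sq]
      rw [hadef]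
      field_simp
      ring
    rw [intervalIntegral.integral_eq_sub_of_hasDerivAt (fun s _ => hG s)
      (Continuous.intervalIntegrable ((Real.continuous_cos.comp hθcont).pow 2) _ _)]
    rw [hθR, hθR2]
    norm_num [Real.sin_two_pi]
    ring
  -- basic positivity at R, R/2
  have hle : R / 2 ≤ R := by linarith
  have hQR2 : 0 < Q (R/2) := hQpos (R/2) hR2
  have hQR : 0 < Q R := hQpos R hR
  have hQle : Q (R/2) ≤ Q R := hQmono (Set.mem_Ioi.2 hR2) (Set.mem_Ioi.2 hR) hle
  have hSnR : 0 < Sn R := hSnpos R hR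
  have hBnR : 0 < Bn R := hBnpos R hR
  set L : ℝ := Real.log (Q R) - Real.log (Q (R/2)) with hLdef
  have hLnn : 0 ≤ L := by
    rw [hLdef]
    have := Real.log_le_log hQR2 hQle
    linarith
  have hFval : F R = a^2 + c^2 + 2*(a*c) := by
    rw [hF, hadef, hcdef]
    field_simp
    ring
  have hΛval : Λ R = 2*a^2 + c^2 + 4*(a*c) := by
    rw [hΛ, hadef, hcdef]
    field_simp
    ring
  have hFnn : 0 ≤ F R := by rw [hFval]; positivity
  have hΛnn : 0 ≤ Λ R := by rw [hΛval]; positivity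
  have hRHS0 : 0 ≤ (Q R / Q (R / 2)) *
      ((4 * Bn R / (R * Sn R)) * F R * L + Λ R) := by
    apply mul_nonneg (div_nonneg hQR.le hQR2.le)
    apply add_nonneg _ hΛnn
    apply mul_nonneg (mul_nonneg (by positivity) hFnn) hLnn
  -- function abbreviations
  set Nf : ℝ → ℝ := fun s => (deriv (f R) s) ^ 2 * deriv V s with hNfdef
  set Df : ℝ → ℝ := fun s => (f R s) ^ 2 * deriv V s with hDfdef
  by_cases hDint : IntervalIntegrable Df volume (R/2) R
  swap
  · rw [intervalIntegral.integral_undef hDint, div_zero]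
    exact hRHS0
  by_cases hNint : IntervalIntegrable Nf volume (R/2) R
  swap
  · rw [intervalIntegral.integral_undef hNint, zero_div]
    exact hRHS0
  -- more abbreviations
  set N1 : ℝ → ℝ := fun s => fd s ^ 2 * (deriv Q s * Bn s) with hN1def
  set N2 : ℝ → ℝ := fun s => fd s ^ 2 * (Q s * Sn s) with hN2def
  set gd : ℝ → ℝ := fun s => (Q s)⁻¹ * deriv Q s with hgddef
  -- continuity facts on Icc
  have hIccpos : ∀ x ∈ Set.Icc (R/2) R, (0:ℝ) < x := fun x hx => lt_of_lt_of_le hR2 hx.1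
  have hQcont : ContinuousOn Q (Set.Icc (R/2) R) := fun x hx =>
    ((hQdiff x (hIccpos x hx)).continuousAt).continuousWithinAt
  have hfdcont : ContinuousOn fd (Set.Icc (R/2) R) := by
    rw [hfddef]
    apply ContinuousOn.div
    · apply ContinuousOn.sub
      · exact (continuous_const.mul (Real.continuous_cos.comp hθcont)).continuousOn
      · apply ContinuousOn.mul (Real.continuous_sin.comp hθcont).continuousOn
        apply ContinuousOn.div hSndcont.continuousOn
          (continuous_const.mul hSncont).continuousOn
        intro x hx
        have := hSnpos x (hIccpos x hx)
        exact mul_ne_zero two_ne_zero this.ne'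
    · exact (Real.continuous_sqrt.comp hSncont).continuousOn
    · intro x hx
      have := hSnpos x (hIccpos x hx)
      positivity
  have hN2cont : ContinuousOn N2 (Set.Icc (R/2) R) := by
    rw [hN2def]
    exact ((hfdcont.pow 2).mul (hQcont.mul hSncont.continuousOn))
  have hN2int : IntervalIntegrable N2 volume (R/2) R := by
    apply ContinuousOn.intervalIntegrable
    rwa [Set.uIcc_of_le hle]
  -- identity for the numerator integrand
  have hderiv_eq : ∀ s ∈ Set.Icc (R/2) R, deriv (f R) s = fd s := fun s hs =>
    (hfd s (hIccpos s hs)).deriv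
  have hNfeq : ∀ s ∈ Set.Icc (R/2) R, Nf s = N1 s + N2 s := by
    intro s hs
    rw [hNfdef]
    simp only []
    rw [hderiv_eq s hs, hVderiv s (hIccpos s hs), hN1def, hN2def]
    ring
  have hN1int : IntervalIntegrable N1 volume (R/2) R := by
    rw [intervalIntegrable_iff_integrableOn_Ioc_of_le hle]
    have h1 : IntervalIntegrable (fun s => Nf s - N2 s) volume (R/2) R := hNint.sub hN2int
    rw [intervalIntegrable_iff_integrableOn_Ioc_of_le hle] at h1
    apply h1.congr_fun _ measurableSet_Ioc
    intro x hx
    have := hNfeq x (Set.Ioc_subset_Icc_self hx)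
    simp only [] at this ⊢
    linarith
  have hNsplit : (∫ s in (R/2)..R, Nf s) = (∫ s in (R/2)..R, N1 s) + ∫ s in (R/2)..R, N2 s := by
    rw [← intervalIntegral.integral_add hN1int hN2int]
    apply intervalIntegral.integral_congr
    intro x hx
    rw [Set.uIcc_of_le hle] at hx
    exact hNfeq x hx
  -- the logarithmic integral
  have hgd_nonneg : ∀ x ∈ Set.Icc (R/2) R, 0 ≤ gd x := by
    intro x hx
    rw [hgddef]
    exact mul_nonneg (inv_nonneg.2 (hQpos x (hIccpos x hx)).le)
      (hQderiv_nonneg x (hIccpos x hx))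
  have hlogQ : ∀ x ∈ Set.Icc (R/2) R, HasDerivAt (fun s => Real.log (Q s)) (gd x) x := by
    intro x hx
    have hx0 := hIccpos x hx
    exact (Real.hasDerivAt_log (hQpos x hx0).ne').comp x (hQdiff x hx0).hasDerivAt
  have hgd_int : IntervalIntegrable gd volume (R/2) R := by
    apply intervalIntegral.intervalIntegrable_deriv_of_nonneg (g := fun s => Real.log (Q s))
    · rw [Set.uIcc_of_le hle]
      exact Real.continuousOn_log.comp hQcont fun x hx => (hQpos x (hIccpos x hx)).ne'
    · intro x hx
      rw [min_eq_left hle, max_eq_right hle] at hx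
      exact hlogQ x (Set.Ioo_subset_Icc_self hx)
    · intro x hx
      rw [min_eq_left hle, max_eq_right hle] at hx
      exact hgd_nonneg x (Set.Ioo_subset_Icc_self hx)
  have hgd_val : (∫ s in (R/2)..R, gd s) = L := by
    rw [intervalIntegral.integral_eq_sub_of_hasDerivAt _ hgd_int, hLdef]
    intro x hx
    rw [Set.uIcc_of_le hle] at hx
    exact hlogQ x hx
  -- bound on N1
  set C1 : ℝ := F R * (Bn R / Sn R) * Q R with hC1def
  have hN1bd : ∀ s ∈ Set.Icc (R/2) R, N1 s ≤ C1 * gd s := by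
    intro s hs
    have hs0 := hIccpos s hs
    have hSns := hSnpos s hs0
    have hBns := hBnpos s hs0
    have hQs := hQpos s hs0
    have hQ' := hQderiv_nonneg s hs0
    have hQsR : Q s ≤ Q R := hQmono (Set.mem_Ioi.2 hs0) (Set.mem_Ioi.2 hR) hs.2
    have hfdF : fd s ^ 2 * Sn s ≤ F R := by
      have h1 := hbd s hs
      have h2 : Real.cos (θ s)^2 ≤ 1 := Real.cos_sq_le_one (θ s)
      have h3 : Real.sin (θ s)^2 ≤ 1 := Real.sin_sq_le_one (θ s)
      rw [hFval]
      nlinarith [sq_nonneg a, sq_nonneg c, mul_pos ha hc]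
    have hfd2 : fd s ^ 2 ≤ F R / Sn s := by
      rw [le_div_iff₀ hSns]
      exact hfdF
    have hBS : Bn s / Sn s ≤ Bn R / Sn R := by
      rw [div_le_div_iff₀ hSns hSnR]
      have := hLemD s R hs0 hs.2
      nlinarith
    have step1 : N1 s ≤ (F R / Sn s) * (deriv Q s * Bn s) := by
      rw [hN1def]
      apply mul_le_mul_of_nonneg_right hfd2 (by positivity)
    have step2 : (F R / Sn s) * (deriv Q s * Bn s) = F R * (Bn s / Sn s) * deriv Q s := by
      field_simp
    have step3 : F R * (Bn s / Sn s) * deriv Q s ≤ F R * (Bn R / Sn R) * deriv Q s := by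
      apply mul_le_mul_of_nonneg_right _ hQ'
      exact mul_le_mul_of_nonneg_left hBS hFnn
    have step4 : F R * (Bn R / Sn R) * deriv Q s ≤ C1 * gd s := by
      rw [hC1def, hgddef]
      have h5 : (1:ℝ) ≤ Q R * (Q s)⁻¹ := by
        rw [← div_eq_mul_inv, le_div_iff₀ hQs]
        linarith
      have h6 : deriv Q s ≤ Q R * ((Q s)⁻¹ * deriv Q s) := by
        have h7 := mul_le_mul_of_nonneg_right h5 hQ'
        rw [one_mul, mul_assoc] at h7
        exact h7
      have hpos : 0 ≤ F R * (Bn R / Sn R) := mul_nonneg hFnn (by positivity)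
      have h8 := mul_le_mul_of_nonneg_left h6 hpos
      calc F R * (Bn R / Sn R) * deriv Q s
          ≤ F R * (Bn R / Sn R) * (Q R * ((Q s)⁻¹ * deriv Q s)) := h8
        _ = F R * (Bn R / Sn R) * Q R * ((Q s)⁻¹ * deriv Q s) := by ring
    calc N1 s ≤ (F R / Sn s) * (deriv Q s * Bn s) := step1
      _ = F R * (Bn s / Sn s) * deriv Q s := step2
      _ ≤ F R * (Bn R / Sn R) * deriv Q s := step3
      _ ≤ C1 * gd s := step4
  have hIN1 : (∫ s in (R/2)..R, N1 s) ≤ C1 * L := by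
    have h1 : (∫ s in (R/2)..R, N1 s) ≤ ∫ s in (R/2)..R, C1 * gd s :=
      intervalIntegral.integral_mono_on hle hN1int (hgd_int.const_mul C1) hN1bd
    rwa [intervalIntegral.integral_const_mul, hgd_val] at h1
  -- bound on N2
  have hN2bd : ∀ s ∈ Set.Icc (R/2) R, N2 s ≤
      Q R * (a^2 * Real.cos (θ s)^2 + c^2 * Real.sin (θ s)^2 + a * c) := by
    intro s hs
    have hs0 := hIccpos s hs
    have hSns := hSnpos s hs0
    have hQs := hQpos s hs0
    have hQsR : Q s ≤ Q R := hQmono (Set.mem_Ioi.2 hs0) (Set.mem_Ioi.2 hR) hs.2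
    have h1 := hbd s hs
    have h2 : N2 s = Q s * (fd s ^ 2 * Sn s) := by rw [hN2def]; ring
    have h3 : 0 ≤ fd s ^ 2 * Sn s := by positivity
    rw [h2]
    calc Q s * (fd s ^ 2 * Sn s) ≤ Q R * (fd s ^ 2 * Sn s) :=
          mul_le_mul_of_nonneg_right hQsR h3
      _ ≤ Q R * (a^2 * Real.cos (θ s)^2 + c^2 * Real.sin (θ s)^2 + a * c) :=
          mul_le_mul_of_nonneg_left h1 hQR.le
  have hIN2 : (∫ s in (R/2)..R, N2 s) ≤ Q R * (Λ R * (R/4)) := by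
    have hcont2 : Continuous fun s => Q R * (a^2 * Real.cos (θ s)^2 + c^2 * Real.sin (θ s)^2 + a * c) := by
      apply continuous_const.mul
      exact ((continuous_const.mul ((Real.continuous_cos.comp hθcont).pow 2)).add
        (continuous_const.mul ((Real.continuous_sin.comp hθcont).pow 2))).add continuous_const
    have h1 : (∫ s in (R/2)..R, N2 s) ≤
        ∫ s in (R/2)..R, Q R * (a^2 * Real.cos (θ s)^2 + c^2 * Real.sin (θ s)^2 + a * c) :=
      intervalIntegral.integral_mono_on hle hN2int (hcont2.intervalIntegrable _ _) hN2bd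
    have h2 : (∫ s in (R/2)..R, Q R * (a^2 * Real.cos (θ s)^2 + c^2 * Real.sin (θ s)^2 + a * c))
        = Q R * (a^2 * (R/4) + c^2 * (R/4) + a * c * (R/2)) := by
      rw [intervalIntegral.integral_const_mul]
      congr 1
      rw [intervalIntegral.integral_add, intervalIntegral.integral_add,
        intervalIntegral.integral_const_mul, intervalIntegral.integral_const_mul,
        Isin, Icos, intervalIntegral.integral_const]
      · simp
        ring
      · exact (continuous_const.mul ((Real.continuous_cos.comp hθcont).pow 2)).intervalIntegrable _ _
      · exact (continuous_const.mul ((Real.continuous_sin.comp hθcont).pow 2)).intervalIntegrable _ _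
      · exact ((continuous_const.mul ((Real.continuous_cos.comp hθcont).pow 2)).add
          (continuous_const.mul ((Real.continuous_sin.comp hθcont).pow 2))).intervalIntegrable _ _
      · exact continuous_const.intervalIntegrable _ _
    have hb2 : a^2 * (R/4) + c^2 * (R/4) + a * c * (R/2) ≤ Λ R * (R/4) := by
      rw [hΛval]
      nlinarith [mul_pos ha hc, mul_pos ha ha]
    have h3 := mul_le_mul_of_nonneg_left hb2 hQR.le
    linarith
  -- numerator nonneg
  have hN1nn : 0 ≤ ∫ s in (R/2)..R, N1 s := by
    apply intervalIntegral.integral_nonneg hle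
    intro s hs
    have hs0 := hIccpos s hs
    have := hQderiv_nonneg s hs0
    have := (hBnpos s hs0).le
    rw [hN1def]
    positivity
  have hN2nn : 0 ≤ ∫ s in (R/2)..R, N2 s := by
    apply intervalIntegral.integral_nonneg hle
    intro s hs
    have hs0 := hIccpos s hs
    have := (hQpos s hs0).le
    have := (hSnpos s hs0).le
    rw [hN2def]
    positivity
  -- denominator lower bound
  have hDlowbd : ∀ s ∈ Set.Icc (R/2) R, Q (R/2) * Real.sin (θ s)^2 ≤ Df s := by
    intro s hs
    have hs0 := hIccpos s hs
    have hSns := hSnpos s hs0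
    have hQs := hQpos s hs0
    have hQ' := hQderiv_nonneg s hs0
    have hBns := hBnpos s hs0
    have hQsR2 : Q (R/2) ≤ Q s := hQmono (Set.mem_Ioi.2 hR2) (Set.mem_Ioi.2 hs0) hs.1
    have hfsq : (f R s)^2 = Real.sin (θ s)^2 / Sn s := by
      rw [hf R s, div_pow, Real.sq_sqrt hSns.le]
    rw [hDfdef]
    simp only []
    rw [hfsq, hVderiv s hs0]
    have key : Real.sin (θ s)^2 / Sn s * (deriv Q s * Bn s + Q s * Sn s)
        = Real.sin (θ s)^2 * (deriv Q s * Bn s) / Sn s + Q s * Real.sin (θ s)^2 := by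
      field_simp
    rw [key]
    have h1 : 0 ≤ Real.sin (θ s)^2 * (deriv Q s * Bn s) / Sn s := by positivity
    have h2 := mul_le_mul_of_nonneg_right hQsR2 (sq_nonneg (Real.sin (θ s)))
    linarith
  have hDlow : Q (R/2) * (R/4) ≤ ∫ s in (R/2)..R, Df s := by
    have h1 : (∫ s in (R/2)..R, Q (R/2) * Real.sin (θ s)^2) ≤ ∫ s in (R/2)..R, Df s := by
      apply intervalIntegral.integral_mono_on hle _ hDint hDlowbd
      exact (continuous_const.mul ((Real.continuous_sin.comp hθcont).pow 2)).intervalIntegrable _ _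
    rwa [intervalIntegral.integral_const_mul, Isin] at h1
  have hdpos : 0 < Q (R/2) * (R/4) := by positivity
  -- conclusion
  have hNA : (∫ s in (R/2)..R, Nf s) ≤ C1 * L + Q R * (Λ R * (R/4)) := by
    rw [hNsplit]
    linarith
  have hAnn : 0 ≤ C1 * L + Q R * (Λ R * (R/4)) := by
    have : 0 ≤ C1 * L := mul_nonneg (by rw [hC1def]; positivity) hLnn
    have h2 : 0 ≤ Q R * (Λ R * (R/4)) := by positivity
    linarith
  have hfinal : (∫ s in (R/2)..R, Nf s) / (∫ s in (R/2)..R, Df s) ≤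
      (C1 * L + Q R * (Λ R * (R/4))) / (Q (R/2) * (R/4)) :=
    div_le_div₀ hAnn hNA hdpos hDlow
  have heq : (C1 * L + Q R * (Λ R * (R/4))) / (Q (R/2) * (R/4)) =
      (Q R / Q (R / 2)) * ((4 * Bn R / (R * Sn R)) * F R * L + Λ R) := by
    rw [hC1def]
    field_simp
  rw [heq] at hfinal
  exact hfinal
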